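/- In a finite MDP with γ ≤ c < 1, for any two states s_i, s_j, the difference in optimal values is bounded by the bisimulation distance scaled by 1/(1−c): |V*(s_i) − V*(s_j)| ≤ (1/(1−c))·d̃(s_i, s_j), where d̃ is the fixed point of the max-over-actions bisimulation operator F(d)(x,y) = max_a [(1−c)|R^a_x − R^a_y| + c·W₁(d)(P^a_x, P^a_y)]. Consequently, d̃(s_i,s_j) = 0 implies V*(s_i) = V*(s_j). -/
import Mathlib


open Finset

structure IsPseudometric {S : Type*} (d : S → S → ℝ) : Prop where
  nonneg : ∀ x y, 0 ≤ d x y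
  refl : ∀ x, d x x = 0
  symm : ∀ x y, d x y = d y x
  triangle : ∀ x y z, d x z ≤ d x y + d y z

def IsProb {S : Type*} [Fintype S] (p : S → ℝ) : Prop :=
  (∀ s, 0 ≤ p s) ∧ ∑ s, p s = 1

def IsCoupling {S : Type*} [Fintype S] (γ : S → S → ℝ) (p q : S → ℝ) : Prop :=
  (∀ x y, 0 ≤ γ x y) ∧ (∀ x, ∑ y, γ x y = p x) ∧ (∀ y, ∑ x, γ x y = q y)

noncomputable def W1 {S : Type*} [Fintype S] (d : S → S → ℝ) (p q : S → ℝ) : ℝ :=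
  sInf { r | ∃ γ : S → S → ℝ, IsCoupling γ p q ∧ r = ∑ x, ∑ y, d x y * γ x y }

noncomputable def bisimF {S : Type*} [Fintype S] (R : S → ℝ) (P : S → S → ℝ) (c : ℝ)
    (d : S → S → ℝ) : S → S → ℝ :=
  fun x y => (1 - c) * |R x - R y| + c * W1 d (P x) (P y)

noncomputable def bisimFA {S A : Type*} [Fintype S] [Fintype A] [Nonempty A]
    (R : S → A → ℝ) (P : S → A → S → ℝ) (c : ℝ) (d : S → S → ℝ) : S → S → ℝ :=
  fun x y => ⨆ a : A, ((1 - c) * |R x a - R y a| + c * W1 d (P x a) (P y a))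

lemma coupling_set_nonempty {S : Type*} [Fintype S] (d : S → S → ℝ) {p q : S → ℝ}
    (hp : IsProb p) (hq : IsProb q) :
    { r | ∃ γ : S → S → ℝ, IsCoupling γ p q ∧ r = ∑ x, ∑ y, d x y * γ x y }.Nonempty := by
  refine ⟨_, fun u v => p u * q v, ⟨fun u v => mul_nonneg (hp.1 u) (hq.1 v), ?_, ?_⟩, rfl⟩
  · intro u; rw [← Finset.mul_sum, hq.2, mul_one]
  · intro v; rw [← Finset.sum_mul, hp.2, one_mul]

lemma W1_nonneg {S : Type*} [Fintype S] {d : S → S → ℝ} (hd : ∀ x y, 0 ≤ d x y)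
    {p q : S → ℝ} (hp : IsProb p) (hq : IsProb q) : 0 ≤ W1 d p q := by
  refine le_csInf (coupling_set_nonempty d hp hq) ?_
  rintro r ⟨g, hg, rfl⟩
  exact Finset.sum_nonneg fun u _ => Finset.sum_nonneg fun v _ =>
    mul_nonneg (hd u v) (hg.1 u v)

lemma sum_sub_le_W1 {S : Type*} [Fintype S] {d : S → S → ℝ} (V : S → ℝ) {K L : ℝ}
    (hK : 0 < K) (hVL : ∀ u v, V u - V v ≤ K * d u v + L)
    {p q : S → ℝ} (hp : IsProb p) (hq : IsProb q) :
    (∑ u, p u * V u) - (∑ v, q v * V v) ≤ K * W1 d p q + L := by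
  have key : ((∑ u, p u * V u) - (∑ v, q v * V v) - L) / K ≤ W1 d p q := by
    refine le_csInf (coupling_set_nonempty d hp hq) ?_
    rintro r ⟨g, hg, rfl⟩
    rw [div_le_iff₀ hK]
    have h1 : (∑ u, p u * V u) = ∑ u, ∑ v, g u v * V u := by
      refine Finset.sum_congr rfl fun u _ => ?_
      rw [← hg.2.1 u, Finset.sum_mul]
    have h2 : (∑ v, q v * V v) = ∑ u, ∑ v, g u v * V v := by
      rw [Finset.sum_comm]
      refine Finset.sum_congr rfl fun v _ => ?_
      rw [← hg.2.2 v, Finset.sum_mul]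
    have h3 : (∑ u : S, ∑ v : S, g u v) = 1 := by
      calc (∑ u : S, ∑ v : S, g u v) = ∑ u, p u := Finset.sum_congr rfl fun u _ => hg.2.1 u
      _ = 1 := hp.2
    have h4 : (∑ u, ∑ v, g u v * V u) - (∑ u, ∑ v, g u v * V v)
        = ∑ u, ∑ v, g u v * (V u - V v) := by
      rw [← Finset.sum_sub_distrib]
      refine Finset.sum_congr rfl fun u _ => ?_
      rw [← Finset.sum_sub_distrib]
      exact Finset.sum_congr rfl fun v _ => by ring
    have h5 : (∑ u, ∑ v, g u v * (V u - V v)) ≤ ∑ u, ∑ v, g u v * (K * d u v + L) := by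
      refine Finset.sum_le_sum fun u _ => Finset.sum_le_sum fun v _ => ?_
      exact mul_le_mul_of_nonneg_left (hVL u v) (hg.1 u v)
    have h6 : (∑ u, ∑ v, g u v * (K * d u v + L))
        = K * (∑ u, ∑ v, d u v * g u v) + L * (∑ u : S, ∑ v : S, g u v) := by
      rw [Finset.mul_sum, Finset.mul_sum, ← Finset.sum_add_distrib]
      refine Finset.sum_congr rfl fun u _ => ?_
      rw [Finset.mul_sum, Finset.mul_sum, ← Finset.sum_add_distrib]
      exact Finset.sum_congr rfl fun v _ => by ring
    rw [h1, h2, h4]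
    calc (∑ u, ∑ v, g u v * (V u - V v)) - L ≤ (∑ u, ∑ v, g u v * (K * d u v + L)) - L :=
          by linarith [h5]
    _ = (∑ u, ∑ v, d u v * g u v) * K := by rw [h6, h3]; ring
  rw [div_le_iff₀ hK] at key
  nlinarith [key]

/-- with `γ ≤ c < 1`, the optimal value function is `1/(1-c)`-Lipschitz
with respect to the bisimulation metric; consequently bisimilar states (distance zero)
share the same optimal value. -/
theorem stmt_19 {S A : Type*} [Fintype S] [Fintype A] [Nonempty A]
    (R : S → A → ℝ) (P : S → A → S → ℝ) (hP : ∀ s a, IsProb (P s a))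
    (γ c : ℝ) (hγ0 : 0 ≤ γ) (hγc : γ ≤ c) (hc1 : c < 1)
    (dt : S → S → ℝ) (hdt : IsPseudometric dt) (hfix : bisimFA R P c dt = dt)
    (V : S → ℝ) (hV : ∀ s, V s = ⨆ a : A, (R s a + γ * ∑ s', P s a s' * V s')) :
    (∀ s_i s_j, |V s_i - V s_j| ≤ (1 / (1 - c)) * dt s_i s_j) ∧
    (∀ s_i s_j, dt s_i s_j = 0 → V s_i = V s_j) := by
  have hc : (0 : ℝ) < 1 - c := by linarith
  set K : ℝ := 1 / (1 - c) with hKdef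
  have hK0 : 0 < K := by positivity
  have hKc : K * (1 - c) = 1 := one_div_mul_cancel (ne_of_gt hc)
  suffices h : ∀ s_i s_j, |V s_i - V s_j| ≤ K * dt s_i s_j by
    refine ⟨h, fun si sj h0 => ?_⟩
    have h1 := h si sj
    rw [h0, mul_zero] at h1
    exact sub_eq_zero.mp (abs_nonpos_iff.mp h1)
  by_cases hS : Nonempty S
  · -- main case
    obtain ⟨⟨x, y⟩, -, hmax⟩ := Finset.exists_max_image (Finset.univ : Finset (S × S))
      (fun p => V p.1 - V p.2 - K * dt p.1 p.2) Finset.univ_nonempty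
    set L : ℝ := V x - V y - K * dt x y with hLdef
    have hL : ∀ u v, V u - V v ≤ K * dt u v + L := by
      intro u v
      have := hmax (u, v) (Finset.mem_univ _)
      simp only at this
      linarith
    -- key contraction step
    have hkey : V x - V y ≤ K * dt x y + γ * L := by
      obtain ⟨a, ha⟩ : ∃ a : A, (R x a + γ * ∑ s', P x a s' * V s')
          = ⨆ a : A, (R x a + γ * ∑ s', P x a s' * V s') := exists_eq_ciSup_of_finite
      have hx : V x = R x a + γ * ∑ s', P x a s' * V s' := by rw [hV x, ← ha]
      have hy : R y a + γ * ∑ s', P y a s' * V s' ≤ V y := by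
        rw [hV y]
        exact le_ciSup (f := fun a : A => R y a + γ * ∑ s', P y a s' * V s')
          (Set.Finite.bddAbove (Set.finite_range _)) a
      have hsum : (∑ s', P x a s' * V s') - (∑ s', P y a s' * V s')
          ≤ K * W1 dt (P x a) (P y a) + L :=
        sum_sub_le_W1 V hK0 hL (hP x a) (hP y a)
      have hW0 : 0 ≤ W1 dt (P x a) (P y a) := W1_nonneg hdt.nonneg (hP x a) (hP y a)
      have hdtge : (1 - c) * |R x a - R y a| + c * W1 dt (P x a) (P y a) ≤ dt x y := by
        have hfe : bisimFA R P c dt x y = dt x y := by rw [hfix]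
        rw [← hfe]
        exact le_ciSup (f := fun a : A =>
          (1 - c) * |R x a - R y a| + c * W1 dt (P x a) (P y a))
          (Set.Finite.bddAbove (Set.finite_range _)) a
      have hRa : R x a - R y a ≤ |R x a - R y a| := le_abs_self _
      have step1 : V x - V y ≤ (R x a - R y a)
          + γ * ((∑ s', P x a s' * V s') - (∑ s', P y a s' * V s')) := by
        rw [hx]; linarith [hy]
      have step2 : γ * ((∑ s', P x a s' * V s') - (∑ s', P y a s' * V s'))
          ≤ γ * (K * W1 dt (P x a) (P y a) + L) :=
        mul_le_mul_of_nonneg_left hsum hγ0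
      have step3 : γ * (K * W1 dt (P x a) (P y a)) ≤ c * (K * W1 dt (P x a) (P y a)) :=
        mul_le_mul_of_nonneg_right hγc (by positivity)
      have step4 : |R x a - R y a| + c * (K * W1 dt (P x a) (P y a)) ≤ K * dt x y := by
        have h7 := mul_le_mul_of_nonneg_left hdtge (le_of_lt hK0)
        have e1 : K * ((1 - c) * |R x a - R y a| + c * W1 dt (P x a) (P y a))
            = |R x a - R y a| + c * (K * W1 dt (P x a) (P y a)) := by
          calc K * ((1 - c) * |R x a - R y a| + c * W1 dt (P x a) (P y a))
              = (K * (1 - c)) * |R x a - R y a| + c * (K * W1 dt (P x a) (P y a)) := by ring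
          _ = _ := by rw [hKc, one_mul]
        rw [e1] at h7
        exact h7
      nlinarith [step1, step2, step3, step4, hRa]
    have hLle : L ≤ 0 := by
      have h8 : L ≤ γ * L := by linarith [hkey, hLdef.le, hLdef.ge]
      have h9 : (1 - γ) * L ≤ 0 := by nlinarith [h8]
      by_contra hcon
      push_neg at hcon
      nlinarith [h9, hcon, (show (0:ℝ) < 1 - γ by linarith)]
    intro si sj
    refine abs_sub_le_iff.mpr ⟨?_, ?_⟩
    · linarith [hL si sj, hLle]
    · have h10 := hL sj si
      rw [hdt.symm sj si] at h10
      linarith [hLle]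
  · intro si sj
    exact absurd ⟨si⟩ hS
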